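/- Let E be a finite set, and for S ⊆ E let k(ω) denote the number of connected components of the subgraph with open edge set ω of a finite graph G = (V,E). For the random-cluster probability measure φ with parameters p ∈ (0,1) and q ≥ 1, and an increasing event A, the function p ↦ φ_{p}(A) is non-decreasing in p. -/

import Mathlib

open Finset

/-- Number of connected components of the subgraph of open edges. -/
noncomputable def rcClusters0 {V : Type} (G : SimpleGraph V) (ω : Sym2 V → Bool) : ℕ :=
  Nat.card (Quotient (Relation.EqvGen.setoid (fun x y => G.Adj x y ∧ ω s(x, y) = true)))

/-- Number of open edges. -/
def rcOpen {V : Type} [Fintype V] [DecidableEq V] (G : SimpleGraph V)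
    [DecidableRel G.Adj] (ω : Sym2 V → Bool) : ℕ :=
  (G.edgeFinset.filter (fun e => ω e = true)).card

/-- Random-cluster weight `q^{k(ω)} p^{o(ω)} (1-p)^{|E|-o(ω)}`. -/
noncomputable def rcWeight0 {V : Type} [Fintype V] [DecidableEq V] (G : SimpleGraph V)
    [DecidableRel G.Adj] (p q : ℝ) (ω : Sym2 V → Bool) : ℝ :=
  q ^ rcClusters0 G ω * p ^ rcOpen G ω * (1 - p) ^ (G.edgeFinset.card - rcOpen G ω)

/-- Random-cluster probability of an event `A`. -/
noncomputable def rcProb0 {V : Type} [Fintype V] [DecidableEq V] (G : SimpleGraph V)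
    [DecidableRel G.Adj] (p q : ℝ) (A : Finset (Sym2 V → Bool)) : ℝ :=
  (∑ ω ∈ A, rcWeight0 G p q ω) / ∑ ω : Sym2 V → Bool, rcWeight0 G p q ω

section Aux

variable {V : Type} {G : SimpleGraph V}

/-- The edge relation of the open subgraph. -/
def rcRel (G : SimpleGraph V) (ω : Sym2 V → Bool) : V → V → Prop :=
  fun x y => G.Adj x y ∧ ω s(x, y) = true

/-- Connectivity in the open subgraph. -/
abbrev rcE (G : SimpleGraph V) (ω : Sym2 V → Bool) : V → V → Prop :=
  Relation.EqvGen (rcRel G ω)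

/-- The setoid of connectivity. -/
def rcS (G : SimpleGraph V) (ω : Sym2 V → Bool) : Setoid V :=
  Relation.EqvGen.setoid (rcRel G ω)

lemma rcClusters0_eq (ω : Sym2 V → Bool) :
    rcClusters0 G ω = Nat.card (Quotient (rcS G ω)) := rfl

lemma rcE_mono {ω ω' : Sym2 V → Bool} (h : ω ≤ ω') {a b : V} (hab : rcE G ω a b) :
    rcE G ω' a b := by
  refine Relation.EqvGen.mono (fun u v huv => ⟨huv.1, ?_⟩) _ _ hab
  have := h s(u, v)
  rw [huv.2] at this
  exact le_antisymm (Bool.le_true _) this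

private lemma Etrans {ω : Sym2 V → Bool} {a b c : V} (h1 : rcE G ω a b) (h2 : rcE G ω b c) :
    rcE G ω a c := Relation.EqvGen.trans _ _ _ h1 h2

private lemma Esymm {ω : Sym2 V → Bool} {a b : V} (h1 : rcE G ω a b) : rcE G ω b a :=
  Relation.EqvGen.symm _ _ h1

lemma le_update {ω : Sym2 V → Bool} (e : Sym2 V) [DecidableEq (Sym2 V)] :
    ω ≤ Function.update ω e true := by
  intro f
  by_cases hf : f = e
  · subst hf; rw [Function.update_self]; exact Bool.le_true _
  · rw [Function.update_of_ne hf]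

variable [DecidableEq V]

/-- Characterization of connectivity after opening one edge. -/
lemma rcE_update {ω : Sym2 V → Bool} {x y : V} (hxy : G.Adj x y) (a b : V) :
    rcE G (Function.update ω s(x, y) true) a b ↔
      rcE G ω a b ∨ (rcE G ω a x ∧ rcE G ω y b) ∨ (rcE G ω a y ∧ rcE G ω x b) := by
  constructor
  · intro h
    induction h with
    | rel u v huv =>
        by_cases hs : s(u, v) = s(x, y)
        · rcases Sym2.eq_iff.mp hs with ⟨rfl, rfl⟩ | ⟨rfl, rfl⟩
          · exact Or.inr (Or.inl ⟨Relation.EqvGen.refl _, Relation.EqvGen.refl _⟩)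
          · exact Or.inr (Or.inr ⟨Relation.EqvGen.refl _, Relation.EqvGen.refl _⟩)
        · have h2 := huv.2
          rw [Function.update_of_ne hs] at h2
          exact Or.inl (Relation.EqvGen.rel _ _ ⟨huv.1, h2⟩)
    | refl u => exact Or.inl (Relation.EqvGen.refl u)
    | symm u v _ ih =>
        rcases ih with h | ⟨h1, h2⟩ | ⟨h1, h2⟩
        · exact Or.inl (Esymm h)
        · exact Or.inr (Or.inr ⟨Esymm h2, Esymm h1⟩)
        · exact Or.inr (Or.inl ⟨Esymm h2, Esymm h1⟩)
    | trans u v w _ _ ih1 ih2 =>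
        rcases ih1 with A | ⟨A1, A2⟩ | ⟨A1, A2⟩ <;>
          rcases ih2 with B | ⟨B1, B2⟩ | ⟨B1, B2⟩
        · exact Or.inl (Etrans A B)
        · exact Or.inr (Or.inl ⟨Etrans A B1, B2⟩)
        · exact Or.inr (Or.inr ⟨Etrans A B1, B2⟩)
        · exact Or.inr (Or.inl ⟨A1, Etrans A2 B⟩)
        · exact Or.inr (Or.inl ⟨A1, B2⟩)
        · exact Or.inl (Etrans A1 B2)
        · exact Or.inr (Or.inr ⟨A1, Etrans A2 B⟩)
        · exact Or.inl (Etrans A1 B2)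
        · exact Or.inr (Or.inr ⟨A1, B2⟩)
  · intro h
    have hx : rcE G (Function.update ω s(x, y) true) x y :=
      Relation.EqvGen.rel _ _ ⟨hxy, Function.update_self _ _ _⟩
    have hm : ∀ {c d : V}, rcE G ω c d → rcE G (Function.update ω s(x, y) true) c d :=
      fun h' => rcE_mono (le_update _) h'
    rcases h with h | ⟨h1, h2⟩ | ⟨h1, h2⟩
    · exact hm h
    · exact Etrans (hm h1) (Etrans hx (hm h2))
    · exact Etrans (hm h1) (Etrans (Esymm hx) (hm h2))

/-- Updating a non-edge does not change the cluster count. -/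
lemma clusters_update_not_adj {ω : Sym2 V → Bool} {x y : V} (hxy : ¬ G.Adj x y) :
    rcClusters0 G (Function.update ω s(x, y) true) = rcClusters0 G ω := by
  have hrel : ∀ a b : V, rcRel G (Function.update ω s(x, y) true) a b ↔ rcRel G ω a b := by
    intro a b
    unfold rcRel
    by_cases hs : s(a, b) = s(x, y)
    · constructor
      · rintro ⟨hadj, -⟩
        exfalso
        rcases Sym2.eq_iff.mp hs with ⟨rfl, rfl⟩ | ⟨rfl, rfl⟩
        · exact hxy hadj
        · exact hxy hadj.symm
      · rintro ⟨hadj, -⟩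
        exfalso
        rcases Sym2.eq_iff.mp hs with ⟨rfl, rfl⟩ | ⟨rfl, rfl⟩
        · exact hxy hadj
        · exact hxy hadj.symm
    · rw [Function.update_of_ne hs]
  rw [rcClusters0_eq, rcClusters0_eq]
  have hS : rcS G (Function.update ω s(x, y) true) = rcS G ω :=
    Setoid.ext fun a b =>
      ⟨Relation.EqvGen.mono (fun u v h => (hrel u v).mp h) a b,
       Relation.EqvGen.mono (fun u v h => (hrel u v).mpr h) a b⟩
  rw [hS]

variable [Fintype V]

instance (ω : Sym2 V → Bool) : Finite (Quotient (rcS G ω)) := Quotient.finite _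

/-- Monotone maps between quotients. -/
def rcMap {ω ω' : Sym2 V → Bool} (h : ω ≤ ω') :
    Quotient (rcS G ω) → Quotient (rcS G ω') :=
  Quotient.lift (fun a => Quotient.mk (rcS G ω') a)
    (fun _ _ hab => Quotient.sound (rcE_mono h hab))

lemma rcMap_surjective {ω ω' : Sym2 V → Bool} (h : ω ≤ ω') :
    Function.Surjective (rcMap (G := G) h) := fun c =>
  Quotient.inductionOn c fun a => ⟨Quotient.mk _ a, rfl⟩

lemma clusters_anti {ω ω' : Sym2 V → Bool} (h : ω ≤ ω') :
    rcClusters0 G ω' ≤ rcClusters0 G ω := by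
  rw [rcClusters0_eq, rcClusters0_eq]
  exact Nat.card_le_card_of_surjective _ (rcMap_surjective h)

/-- If the endpoints are already connected, opening the edge keeps the count. -/
lemma clusters_update_connected {ω : Sym2 V → Bool} {x y : V} (hxy : G.Adj x y)
    (hcon : rcE G ω x y) :
    rcClusters0 G (Function.update ω s(x, y) true) = rcClusters0 G ω := by
  rw [rcClusters0_eq, rcClusters0_eq]
  have hS : rcS G (Function.update ω s(x, y) true) = rcS G ω := by
    apply Setoid.ext
    intro a b
    show rcE G (Function.update ω s(x, y) true) a b ↔ rcE G ω a b
    rw [rcE_update hxy]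
    constructor
    · rintro (h | ⟨h1, h2⟩ | ⟨h1, h2⟩)
      · exact h
      · exact Etrans h1 (Etrans hcon h2)
      · exact Etrans h1 (Etrans (Esymm hcon) h2)
    · exact Or.inl
  rw [hS]

/-- Opening one edge decreases the count by at most 1. -/
lemma clusters_le_update_add_one {ω : Sym2 V → Bool} {x y : V} (hxy : G.Adj x y) :
    rcClusters0 G ω ≤ rcClusters0 G (Function.update ω s(x, y) true) + 1 := by
  classical
  rw [rcClusters0_eq, rcClusters0_eq]
  letI : Fintype (Quotient (rcS G ω)) := Fintype.ofFinite _
  letI : Fintype (Quotient (rcS G (Function.update ω s(x, y) true))) := Fintype.ofFinite _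
  rw [Nat.card_eq_fintype_card, Nat.card_eq_fintype_card]
  have key : ∀ c₁ c₂ : Quotient (rcS G ω),
      rcMap (G := G) (le_update s(x, y)) c₁ = rcMap (G := G) (le_update s(x, y)) c₂ →
      c₁ ≠ Quotient.mk _ y → c₂ ≠ Quotient.mk _ y → c₁ = c₂ := by
    intro c₁ c₂ hc h1 h2
    obtain ⟨a, rfl⟩ := Quotient.exists_rep c₁
    obtain ⟨b, rfl⟩ := Quotient.exists_rep c₂
    have hab : rcE G (Function.update ω s(x, y) true) a b := Quotient.exact hc
    rcases (rcE_update hxy a b).mp hab with h | ⟨ha, hb⟩ | ⟨ha, hb⟩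
    · exact Quotient.sound h
    · exact absurd (Quotient.sound (Esymm hb)) h2
    · exact absurd (Quotient.sound ha) h1
  have hinj : Function.Injective
      (fun c : {c : Quotient (rcS G ω) // c ≠ Quotient.mk _ y} =>
        rcMap (G := G) (le_update s(x, y)) c.1) := by
    rintro ⟨c₁, hc₁⟩ ⟨c₂, hc₂⟩ h
    exact Subtype.ext (key c₁ c₂ h hc₁ hc₂)
  have h1 : Fintype.card {c : Quotient (rcS G ω) // c ≠ Quotient.mk _ y} ≤
      Fintype.card (Quotient (rcS G (Function.update ω s(x, y) true))) :=
    Fintype.card_le_of_injective _ hinj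
  have h2 : Fintype.card {c : Quotient (rcS G ω) // ¬ c = Quotient.mk _ y} =
      Fintype.card (Quotient (rcS G ω)) -
        Fintype.card {c : Quotient (rcS G ω) // c = Quotient.mk _ y} :=
    Fintype.card_subtype_compl _
  have h3 : Fintype.card {c : Quotient (rcS G ω) // c = Quotient.mk (rcS G ω) y} = 1 :=
    Fintype.card_subtype_eq _
  have h4 : 0 < Fintype.card (Quotient (rcS G ω)) :=
    Fintype.card_pos_iff.mpr ⟨Quotient.mk _ y⟩
  simp only [ne_eq] at h1
  omega

/-- Opening an edge between disconnected endpoints strictly decreases the count. -/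
lemma clusters_update_lt {ω : Sym2 V → Bool} {x y : V} (hxy : G.Adj x y)
    (hcon : ¬ rcE G ω x y) :
    rcClusters0 G (Function.update ω s(x, y) true) < rcClusters0 G ω := by
  classical
  rw [rcClusters0_eq, rcClusters0_eq]
  letI : Fintype (Quotient (rcS G ω)) := Fintype.ofFinite _
  letI : Fintype (Quotient (rcS G (Function.update ω s(x, y) true))) := Fintype.ofFinite _
  rw [Nat.card_eq_fintype_card, Nat.card_eq_fintype_card]
  have hsurj : Function.Surjective (rcMap (G := G) (le_update (ω := ω) s(x, y))) :=
    rcMap_surjective _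
  haveI : Nonempty (Quotient (rcS G (Function.update ω s(x, y) true))) :=
    ⟨Quotient.mk _ x⟩
  set σ := Function.surjInv hsurj with hσdef
  have hσ : Function.Injective σ := Function.injective_surjInv hsurj
  have hxyne : (Quotient.mk (rcS G ω) x) ≠ Quotient.mk _ y := fun h => hcon (Quotient.exact h)
  have hφxy : rcMap (G := G) (le_update (ω := ω) s(x, y)) (Quotient.mk _ x) =
      rcMap (G := G) (le_update (ω := ω) s(x, y)) (Quotient.mk _ y) :=
    Quotient.sound (Relation.EqvGen.rel _ _ ⟨hxy, Function.update_self _ _ _⟩)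
  have hnotmem : (Quotient.mk (rcS G ω) x) ∉ Set.range σ ∨
      (Quotient.mk (rcS G ω) y) ∉ Set.range σ := by
    by_contra h
    push_neg at h
    obtain ⟨⟨c₁, hc₁⟩, ⟨c₂, hc₂⟩⟩ := h
    have e1 : c₁ = rcMap (G := G) (le_update (ω := ω) s(x, y)) (Quotient.mk _ x) := by
      rw [← hc₁]; exact (Function.rightInverse_surjInv hsurj c₁).symm
    have e2 : c₂ = rcMap (G := G) (le_update (ω := ω) s(x, y)) (Quotient.mk _ y) := by
      rw [← hc₂]; exact (Function.rightInverse_surjInv hsurj c₂).symm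
    apply hxyne
    rw [← hc₁, ← hc₂, e1, e2, hφxy]
  rcases hnotmem with h | h
  · exact Fintype.card_lt_of_injective_of_notMem σ hσ h
  · exact Fintype.card_lt_of_injective_of_notMem σ hσ h

/-- Single-edge step inequality. -/
lemma clusters_step {ω ω'' : Sym2 V → Bool} (h : ω ≤ ω'') (e : Sym2 V) :
    rcClusters0 G (Function.update ω e true) + rcClusters0 G ω'' ≤
      rcClusters0 G ω + rcClusters0 G (Function.update ω'' e true) := by
  classical
  induction e using Sym2.inductionOn with
  | hf x y =>
  by_cases hadj : G.Adj x y
  · by_cases h2 : rcE G ω'' x y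
    · rw [clusters_update_connected hadj h2]
      by_cases h1 : rcE G ω x y
      · rw [clusters_update_connected hadj h1]
      · have := clusters_anti (G := G) (le_update (ω := ω) s(x, y))
        omega
    · have h1 : ¬ rcE G ω x y := fun hc => h2 (rcE_mono h hc)
      have l1 := clusters_update_lt hadj h1
      have l2 := clusters_le_update_add_one (ω := ω'') hadj
      omega
  · rw [clusters_update_not_adj hadj, clusters_update_not_adj hadj]

/-- Supermodularity of the cluster count. -/
lemma clusters_supermodular (a b : Sym2 V → Bool) :
    rcClusters0 G a + rcClusters0 G b ≤
      rcClusters0 G (a ⊓ b) + rcClusters0 G (a ⊔ b) := by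
  classical
  suffices H : ∀ (n : ℕ) (a : Sym2 V → Bool),
      (univ.filter fun e => a e = true ∧ b e = false).card = n →
      rcClusters0 G a + rcClusters0 G b ≤
        rcClusters0 G (a ⊓ b) + rcClusters0 G (a ⊔ b) from H _ a rfl
  intro n
  induction n with
  | zero =>
      intro a hn
      have hab : ∀ e, a e = true → b e = true := by
        intro e he
        by_contra hb
        have : e ∈ univ.filter fun e => a e = true ∧ b e = false :=
          mem_filter.mpr ⟨mem_univ _, he, by simpa using hb⟩
        rw [card_eq_zero.mp hn] at this
        exact absurd this (notMem_empty _)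
      have h1 : a ⊓ b = a := by
        funext e
        cases ha : a e
        · simp [Pi.inf_apply, ha]
        · simp [Pi.inf_apply, ha, hab e ha]
      have h2 : a ⊔ b = b := by
        funext e
        cases ha : a e
        · simp [Pi.sup_apply, ha]
        · simp [Pi.sup_apply, ha, hab e ha]
      rw [h1, h2]
  | succ n ih =>
      intro a hn
      have hne : (univ.filter fun e => a e = true ∧ b e = false).Nonempty := by
        rw [← card_pos, hn]; omega
      obtain ⟨e, he⟩ := hne
      rw [mem_filter] at he
      obtain ⟨-, hae, hbe⟩ := he
      set a' := Function.update a e false with ha'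
      have haa' : a = Function.update a' e true := by
        funext f
        by_cases hf : f = e
        · subst hf; rw [Function.update_self, hae]
        · rw [Function.update_of_ne hf, ha', Function.update_of_ne hf]
      have hcard : (univ.filter fun f => a' f = true ∧ b f = false).card = n := by
        have : (univ.filter fun f => a' f = true ∧ b f = false) =
            (univ.filter fun f => a f = true ∧ b f = false).erase e := by
          ext f
          rw [mem_erase, mem_filter, mem_filter]
          constructor
          · intro ⟨_, hf1, hf2⟩
            have hfe : f ≠ e := by
              intro hfe; subst hfe
              rw [ha', Function.update_self] at hf1
              exact absurd hf1 (by simp)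
            rw [ha', Function.update_of_ne hfe] at hf1
            exact ⟨hfe, mem_univ _, hf1, hf2⟩
          · intro ⟨hfe, _, hf1, hf2⟩
            rw [ha', Function.update_of_ne hfe]
            exact ⟨mem_univ _, hf1, hf2⟩
        rw [this, card_erase_of_mem, hn]
        · rfl
        · exact mem_filter.mpr ⟨mem_univ _, hae, hbe⟩
      have hinf : a' ⊓ b = a ⊓ b := by
        funext f
        by_cases hf : f = e
        · subst hf
          rw [Pi.inf_apply, Pi.inf_apply, ha', Function.update_self, hae, hbe]
          decide
        · rw [Pi.inf_apply, Pi.inf_apply, ha', Function.update_of_ne hf]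
      have hsup : Function.update (a' ⊔ b) e true = a ⊔ b := by
        funext f
        by_cases hf : f = e
        · subst hf
          rw [Function.update_self, Pi.sup_apply, hae]
          exact ((by decide : ∀ u : Bool, true ⊔ u = true) _).symm
        · rw [Function.update_of_ne hf, Pi.sup_apply, Pi.sup_apply, ha',
            Function.update_of_ne hf]
      have hstep := clusters_step (G := G) (le_sup_left : a' ≤ a' ⊔ b) e
      rw [← haa', hsup] at hstep
      have hih := ih a' hcard
      rw [hinf] at hih
      omega

/-- sum/inf identity for open edge counts. -/
lemma rcOpen_inf_add_sup [DecidableRel G.Adj] (a b : Sym2 V → Bool) :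
    rcOpen G (a ⊓ b) + rcOpen G (a ⊔ b) = rcOpen G a + rcOpen G b := by
  classical
  unfold rcOpen
  have h1 : G.edgeFinset.filter (fun e => (a ⊓ b) e = true) =
      (G.edgeFinset.filter (fun e => a e = true)) ∩
        (G.edgeFinset.filter (fun e => b e = true)) := by
    ext e
    simp only [mem_filter, mem_inter, Pi.inf_apply]
    constructor
    · rintro ⟨he, hab⟩
      have : a e = true ∧ b e = true := by
        revert hab; cases a e <;> cases b e <;> decide
      exact ⟨⟨he, this.1⟩, he, this.2⟩
    · rintro ⟨⟨he, ha⟩, -, hb⟩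
      exact ⟨he, by rw [ha, hb]; decide⟩
  have h2 : G.edgeFinset.filter (fun e => (a ⊔ b) e = true) =
      (G.edgeFinset.filter (fun e => a e = true)) ∪
        (G.edgeFinset.filter (fun e => b e = true)) := by
    ext e
    simp only [mem_filter, mem_union, Pi.sup_apply]
    constructor
    · rintro ⟨he, hab⟩
      have : a e = true ∨ b e = true := by
        revert hab; cases a e <;> cases b e <;> decide
      rcases this with h | h
      · exact Or.inl ⟨he, h⟩
      · exact Or.inr ⟨he, h⟩
    · rintro (⟨he, ha⟩ | ⟨he, hb⟩)
      · exact ⟨he, by rw [ha]; cases b e <;> decide⟩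
      · exact ⟨he, by rw [hb]; cases a e <;> decide⟩
  rw [h1, h2]
  exact Finset.card_inter_add_card_union _ _

lemma rcOpen_inf_le [DecidableRel G.Adj] (a b : Sym2 V → Bool) :
    rcOpen G (a ⊓ b) ≤ rcOpen G a := by
  apply card_le_card
  intro e he
  rw [mem_filter] at he ⊢
  refine ⟨he.1, ?_⟩
  have h2 := he.2
  rw [Pi.inf_apply] at h2
  revert h2
  cases a e <;> cases b e <;> decide

lemma rcOpen_le_card [DecidableRel G.Adj] (a : Sym2 V → Bool) :
    rcOpen G a ≤ G.edgeFinset.card :=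
  card_filter_le _ _

end Aux

/-- Pure arithmetic core of the Holley condition. -/
lemma rc_arith (p₁ p₂ q : ℝ) (hq : 1 ≤ q) (h0 : 0 < p₁) (h12 : p₁ ≤ p₂) (h1 : p₂ < 1)
    (m k₁ k₂ k₃ k₄ n₁ n₂ n₃ n₄ : ℕ) (hk : k₁ + k₂ ≤ k₃ + k₄)
    (hn : n₃ + n₄ = n₁ + n₂) (h31 : n₃ ≤ n₁) (hm1 : n₁ ≤ m) (hm4 : n₄ ≤ m) :
    q ^ k₁ * p₁ ^ n₁ * (1 - p₁) ^ (m - n₁) * (q ^ k₂ * p₂ ^ n₂ * (1 - p₂) ^ (m - n₂)) ≤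
      q ^ k₃ * p₁ ^ n₃ * (1 - p₁) ^ (m - n₃) * (q ^ k₄ * p₂ ^ n₄ * (1 - p₂) ^ (m - n₄)) := by
  have hp₂0 : 0 < p₂ := lt_of_lt_of_le h0 h12
  have hp₁1 : p₁ < 1 := lt_of_le_of_lt h12 h1
  have hr₁ : 0 < 1 - p₁ := by linarith
  have hr₂ : 0 < 1 - p₂ := by linarith
  have hq0 : 0 < q := lt_of_lt_of_le one_pos hq
  set d := n₁ - n₃ with hd
  have hn2m : n₂ ≤ m := by omega
  have P1 : p₁ ^ n₁ = p₁ ^ n₃ * p₁ ^ d := by rw [← pow_add]; congr 1; omega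
  have P2 : p₂ ^ n₄ = p₂ ^ n₂ * p₂ ^ d := by rw [← pow_add]; congr 1; omega
  have P3 : (1 - p₁) ^ (m - n₃) = (1 - p₁) ^ (m - n₁) * (1 - p₁) ^ d := by
    rw [← pow_add]; congr 1; omega
  have P4 : (1 - p₂) ^ (m - n₂) = (1 - p₂) ^ (m - n₄) * (1 - p₂) ^ d := by
    rw [← pow_add]; congr 1; omega
  rw [P1, P2, P3, P4]
  have key : (p₁ * (1 - p₂)) ^ d ≤ ((1 - p₁) * p₂) ^ d := by
    apply pow_le_pow_left₀ (by positivity) (by nlinarith)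
  have hqk : q ^ k₁ * q ^ k₂ ≤ q ^ k₃ * q ^ k₄ := by
    rw [← pow_add, ← pow_add]
    exact pow_le_pow_right₀ hq hk
  set K : ℝ := p₁ ^ n₃ * (1 - p₁) ^ (m - n₁) * p₂ ^ n₂ * (1 - p₂) ^ (m - n₄) with hK
  have hK0 : 0 ≤ K := by positivity
  calc q ^ k₁ * (p₁ ^ n₃ * p₁ ^ d) * (1 - p₁) ^ (m - n₁) *
        (q ^ k₂ * p₂ ^ n₂ * ((1 - p₂) ^ (m - n₄) * (1 - p₂) ^ d))
      = (q ^ k₁ * q ^ k₂) * K * (p₁ * (1 - p₂)) ^ d := by rw [mul_pow, hK]; ring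
    _ ≤ (q ^ k₃ * q ^ k₄) * K * ((1 - p₁) * p₂) ^ d := by
        apply mul_le_mul (mul_le_mul hqk le_rfl hK0 (by positivity)) key (by positivity)
          (by positivity)
    _ = q ^ k₃ * p₁ ^ n₃ * ((1 - p₁) ^ (m - n₁) * (1 - p₁) ^ d) *
        (q ^ k₄ * (p₂ ^ n₂ * p₂ ^ d) * (1 - p₂) ^ (m - n₄)) := by rw [mul_pow, hK]; ring

/-- The Holley lattice condition for the random-cluster weights. -/
lemma rcWeight0_holley {V : Type} [Fintype V] [DecidableEq V] (G : SimpleGraph V)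
    [DecidableRel G.Adj] {p₁ p₂ q : ℝ} (hq : 1 ≤ q) (h0 : 0 < p₁) (h12 : p₁ ≤ p₂)
    (h1 : p₂ < 1) (a b : Sym2 V → Bool) :
    rcWeight0 G p₁ q a * rcWeight0 G p₂ q b ≤
      rcWeight0 G p₁ q (a ⊓ b) * rcWeight0 G p₂ q (a ⊔ b) := by
  unfold rcWeight0
  exact rc_arith p₁ p₂ q hq h0 h12 h1 G.edgeFinset.card _ _ _ _ _ _ _ _
    (clusters_supermodular a b) (rcOpen_inf_add_sup a b) (rcOpen_inf_le a b)
    (rcOpen_le_card a) (rcOpen_le_card (a ⊔ b))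

/-- For `q ≥ 1` and an increasing event `A`, `p ↦ φ_p(A)` is non-decreasing on `(0,1)`. -/
theorem stmt11 {V : Type} [Fintype V] [DecidableEq V] (G : SimpleGraph V)
    [DecidableRel G.Adj] (q : ℝ) (hq : 1 ≤ q) (A : Finset (Sym2 V → Bool))
    (hA : ∀ ω ω' : Sym2 V → Bool, ω ≤ ω' → ω ∈ A → ω' ∈ A)
    (p₁ p₂ : ℝ) (h0 : 0 < p₁) (h12 : p₁ ≤ p₂) (h1 : p₂ < 1) :
    rcProb0 G p₁ q A ≤ rcProb0 G p₂ q A := by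
  classical
  have hp₂0 : 0 < p₂ := lt_of_lt_of_le h0 h12
  have hp₁1 : p₁ < 1 := lt_of_le_of_lt h12 h1
  have hq0 : 0 < q := lt_of_lt_of_le one_pos hq
  have hw₁pos : ∀ ω, 0 < rcWeight0 G p₁ q ω := by
    intro ω
    unfold rcWeight0
    have h : 0 < 1 - p₁ := by linarith
    positivity
  have hw₂pos : ∀ ω, 0 < rcWeight0 G p₂ q ω := by
    intro ω
    unfold rcWeight0
    have h : 0 < 1 - p₂ := by linarith
    positivity
  set Z₁ := ∑ ω : Sym2 V → Bool, rcWeight0 G p₁ q ω with hZ₁def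
  set Z₂ := ∑ ω : Sym2 V → Bool, rcWeight0 G p₂ q ω with hZ₂def
  have hZ₁ : 0 < Z₁ := Finset.sum_pos (fun ω _ => hw₁pos ω) univ_nonempty
  have hZ₂ : 0 < Z₂ := Finset.sum_pos (fun ω _ => hw₂pos ω) univ_nonempty
  rw [rcProb0, rcProb0, ← hZ₁def, ← hZ₂def, div_le_div_iff₀ hZ₁ hZ₂]
  -- Apply Holley's inequality
  set μ : (Sym2 V → Bool) → ℝ := fun ω => if ω ∈ A then 1 else 0 with hμdef
  set f : (Sym2 V → Bool) → ℝ := fun ω => rcWeight0 G p₁ q ω * Z₂ with hfdef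
  set g : (Sym2 V → Bool) → ℝ := fun ω => rcWeight0 G p₂ q ω * Z₁ with hgdef
  have hμ0 : 0 ≤ μ := fun ω => by rw [hμdef]; dsimp; split_ifs <;> norm_num
  have hf0 : 0 ≤ f := fun ω => le_of_lt (mul_pos (hw₁pos ω) hZ₂)
  have hg0 : 0 ≤ g := fun ω => le_of_lt (mul_pos (hw₂pos ω) hZ₁)
  have hμmono : Monotone μ := by
    intro ω ω' hle
    rw [hμdef]; dsimp
    by_cases hω : ω ∈ A
    · rw [if_pos hω, if_pos (hA ω ω' hle hω)]
    · rw [if_neg hω]; split_ifs <;> norm_num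
  have hfg : ∑ ω, f ω = ∑ ω, g ω := by
    rw [hfdef, hgdef]
    dsimp only
    rw [← Finset.sum_mul, ← Finset.sum_mul, ← hZ₁def, ← hZ₂def, mul_comm]
  have hcond : ∀ a b, f a * g b ≤ f (a ⊓ b) * g (a ⊔ b) := by
    intro a b
    rw [hfdef, hgdef]
    dsimp only
    calc rcWeight0 G p₁ q a * Z₂ * (rcWeight0 G p₂ q b * Z₁)
        = rcWeight0 G p₁ q a * rcWeight0 G p₂ q b * (Z₂ * Z₁) := by ring
      _ ≤ rcWeight0 G p₁ q (a ⊓ b) * rcWeight0 G p₂ q (a ⊔ b) * (Z₂ * Z₁) := by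
          apply mul_le_mul_of_nonneg_right (rcWeight0_holley G hq h0 h12 h1 a b)
            (le_of_lt (mul_pos hZ₂ hZ₁))
      _ = rcWeight0 G p₁ q (a ⊓ b) * Z₂ * (rcWeight0 G p₂ q (a ⊔ b) * Z₁) := by ring
  have H := holley (μ := μ) (f := f) (g := g) hμ0 hf0 hg0 hμmono hfg hcond
  have e₁ : ∑ ω, μ ω * f ω = (∑ ω ∈ A, rcWeight0 G p₁ q ω) * Z₂ := by
    calc ∑ ω, μ ω * f ω
        = ∑ ω : Sym2 V → Bool, (if ω ∈ A then rcWeight0 G p₁ q ω * Z₂ else 0) := by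
          apply Finset.sum_congr rfl
          intro ω _
          rw [hμdef, hfdef]
          dsimp only
          split_ifs <;> ring
      _ = ∑ ω ∈ univ ∩ A, rcWeight0 G p₁ q ω * Z₂ := Finset.sum_ite_mem _ _ _
      _ = (∑ ω ∈ A, rcWeight0 G p₁ q ω) * Z₂ := by rw [univ_inter, Finset.sum_mul]
  have e₂ : ∑ ω, μ ω * g ω = (∑ ω ∈ A, rcWeight0 G p₂ q ω) * Z₁ := by
    calc ∑ ω, μ ω * g ω
        = ∑ ω : Sym2 V → Bool, (if ω ∈ A then rcWeight0 G p₂ q ω * Z₁ else 0) := by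
          apply Finset.sum_congr rfl
          intro ω _
          rw [hμdef, hgdef]
          dsimp only
          split_ifs <;> ring
      _ = ∑ ω ∈ univ ∩ A, rcWeight0 G p₂ q ω * Z₁ := Finset.sum_ite_mem _ _ _
      _ = (∑ ω ∈ A, rcWeight0 G p₂ q ω) * Z₁ := by rw [univ_inter, Finset.sum_mul]
  rw [← e₁, ← e₂]
  exact H
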